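/- Let G be an ADMG with c-components {C_i}, let H be an h-node (a union of c-components), and let 𝒜 ⊆ An_G(H)\H satisfy the modularity condition. Then for any strictly positive SCM inducing G, P(H ∪ 𝒜 | do(Pa(H ∪ 𝒜))) = P_{Pa(H)}(H) · ∏_{C_j^+} P_{Pa(C_j^+)}(C_j^+), where the product ranges over the nonempty intersections C_j^+ = C_j ∩ 𝒜 of c-components of G with 𝒜. Consequently, the c-factor of H is identified as P_{Pa(H)}(H) = P(H ∪ 𝒜 | Pa(H ∪ 𝒜)) / ∏_{C_j^+} P_{Pa(C_j^+)}(C_j^+). -/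

import Mathlib

open Classical

noncomputable section

/-- An acyclic directed mixed graph (ADMG): directed edges (causal) and
bidirected edges (latent confounders). -/
structure ADMG (V : Type) where
  dir : V → V → Prop
  bidir : V → V → Prop
  bidir_symm : ∀ a b, bidir a b → bidir b a
  acyclic : ∀ v, ¬ Relation.TransGen dir v v

namespace ADMG

variable {V : Type} [Fintype V] [DecidableEq V]

/-- Observed parents of a set `W`, outside `W`. -/
def parents (G : ADMG V) (W : Set V) : Set V :=
  {v | v ∉ W ∧ ∃ w ∈ W, G.dir v w}

/-- Observed parents of a finite set `W`, outside `W`. -/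
def parentsF (G : ADMG V) (W : Finset V) : Finset V :=
  Finset.univ.filter fun v => v ∉ W ∧ ∃ w ∈ W, G.dir v w

/-- Ancestors of a set `W` (including `W` itself). -/
def ancestors (G : ADMG V) (W : Set V) : Set V :=
  {v | ∃ w ∈ W, Relation.ReflTransGen G.dir v w}

/-- Ancestors of a finite set `W` (including `W` itself). -/
def ancestorsF (G : ADMG V) (W : Finset V) : Finset V :=
  Finset.univ.filter fun v => ∃ w ∈ W, Relation.ReflTransGen G.dir v w

/-- Bidirected connectivity (paths of bidirected edges). -/
def biConn (G : ADMG V) (a b : V) : Prop :=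
  Relation.ReflTransGen G.bidir a b

/-- `C` is a c-component of `G`: a maximal bidirected-connected set. -/
def isCComponent (G : ADMG V) (C : Set V) : Prop :=
  C.Nonempty ∧ (∀ a ∈ C, ∀ b ∈ C, G.biConn a b) ∧
    ∀ a ∈ C, ∀ b, G.biConn a b → b ∈ C

/-- The set of c-components of `G`. -/
def cComponents (G : ADMG V) : Set (Set V) := {C | G.isCComponent C}

/-- The graph after `do(I)`: incoming directed edges into `I` and bidirected
edges incident to `I` are removed. -/
def doGraph (G : ADMG V) (I : Set V) : ADMG V where
  dir a b := G.dir a b ∧ b ∉ I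
  bidir a b := G.bidir a b ∧ a ∉ I ∧ b ∉ I
  bidir_symm := fun a b h => ⟨G.bidir_symm a b h.1, h.2.2, h.2.1⟩
  acyclic := fun v h => G.acyclic v (Relation.TransGen.mono (fun _ _ hx => hx.1) v v h)

/-- The graph with all outgoing directed edges of `X` removed. -/
def underGraph (G : ADMG V) (X : Set V) : ADMG V where
  dir a b := G.dir a b ∧ a ∉ X
  bidir := G.bidir
  bidir_symm := G.bidir_symm
  acyclic := fun v h => G.acyclic v (Relation.TransGen.mono (fun _ _ hx => hx.1) v v h)

/-- The induced sub-graph on a vertex set `S`. -/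
def induced (G : ADMG V) (S : Set V) : ADMG V where
  dir a b := G.dir a b ∧ a ∈ S ∧ b ∈ S
  bidir a b := G.bidir a b ∧ a ∈ S ∧ b ∈ S
  bidir_symm := fun a b h => ⟨G.bidir_symm a b h.1, h.2.2, h.2.1⟩
  acyclic := fun v h => G.acyclic v (Relation.TransGen.mono (fun _ _ hx => hx.1) v v h)

/-- Adjacency in the mixed graph. -/
def adjacent (G : ADMG V) (a b : V) : Prop := G.dir a b ∨ G.dir b a ∨ G.bidir a b

/-- The edge between `a` and `b` points into `b`. -/
def intoEdge (G : ADMG V) (a b : V) : Prop := G.dir a b ∨ G.bidir a b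

/-- `b` is a collider on the consecutive triple `a, b, c`. -/
def isCollider (G : ADMG V) (a b c : V) : Prop := G.intoEdge a b ∧ G.intoEdge c b

/-- A walk (list of vertices) that is active given the conditioning set `Z`:
non-colliders avoid `Z`, colliders have a descendant in `Z`. -/
def ActiveWalk (G : ADMG V) (Z : Set V) (p : List V) : Prop :=
  p.Chain' G.adjacent ∧
    ∀ i a b c, p[i]? = some a → p[i + 1]? = some b → p[i + 2]? = some c →
      (G.isCollider a b c → ∃ z ∈ Z, Relation.ReflTransGen G.dir b z) ∧
      (¬ G.isCollider a b c → b ∉ Z)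

/-- d-connection of `X` and `Y` given `Z` in the mixed graph (m-connection). -/
def dConnected (G : ADMG V) (X Y Z : Set V) : Prop :=
  ∃ p : List V, G.ActiveWalk Z p ∧
    (∃ x ∈ X, p.head? = some x) ∧ ∃ y ∈ Y, p.getLast? = some y

/-- d-separation of `X` and `Y` given `Z`. -/
def dSeparated (G : ADMG V) (X Y Z : Set V) : Prop := ¬ G.dConnected X Y Z

end ADMG

/-- A (semi-Markovian) structural causal model over the ADMG `G`, with observed
variables valued in `Val`: independent finite latents `L`, mechanisms `f`
reading only observed parents and own latents (shared latents forcing a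
bidirected edge), and the solution map of the structural equations under an
intervention. -/
structure SCM (V : Type) (Val : Type) [Fintype V] [DecidableEq V] [Fintype Val]
    (G : ADMG V) where
  L : Type
  [fintL : Fintype L]
  [decL : DecidableEq L]
  NVal : Type
  [fintN : Fintype NVal]
  ν : L → NVal → ℝ
  ν_nonneg : ∀ l x, 0 ≤ ν l x
  ν_sum : ∀ l, ∑ x, ν l x = 1
  reads : V → L → Prop
  semiMarkov : ∀ v w l, v ≠ w → reads v l → reads w l → G.bidir v w
  f : V → (V → Val) → (L → NVal) → Val
  f_parents : ∀ v x y ω, (∀ p, G.dir p v → x p = y p) → f v x ω = f v y ω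
  f_latents : ∀ v x ω ω', (∀ l, reads v l → ω l = ω' l) → f v x ω = f v x ω'
  solve : Finset V → (V → Val) → (L → NVal) → V → Val
  solve_spec : ∀ I x ω v,
    solve I x ω v = if v ∈ I then x v else f v (solve I x ω) ω

namespace SCM

attribute [instance] SCM.fintL SCM.decL SCM.fintN

variable {V Val : Type} [Fintype V] [DecidableEq V] [Fintype Val] {G : ADMG V}

/-- Probability of a full latent configuration (latents are independent). -/
def μ (M : SCM V Val G) (ω : M.L → M.NVal) : ℝ := ∏ l, M.ν l (ω l)

/-- The interventional distribution `P(y | do(I := x))` (observational for `I = ∅`). -/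
def P (M : SCM V Val G) (I : Finset V) (x : V → Val) (y : V → Val) : ℝ :=
  ∑ ω : M.L → M.NVal, if M.solve I x ω = y then M.μ ω else 0

/-- The marginal interventional distribution `P(S = y|_S | do(I := x))`. -/
def Pm (M : SCM V Val G) (I : Finset V) (x : V → Val) (S : Finset V) (y : V → Val) : ℝ :=
  ∑ z : V → Val, if ∀ v ∈ S, z v = y v then M.P I x z else 0

/-- The conditional distribution `P(S = y|_S | C = y|_C, do(I := x))`. -/
def cond (M : SCM V Val G) (I : Finset V) (x : V → Val) (S C : Finset V)
    (y : V → Val) : ℝ :=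
  M.Pm I x (S ∪ C) y / M.Pm I x C y

/-- Strict positivity of the induced observational distribution. -/
def positive (M : SCM V Val G) : Prop := ∀ x y, 0 < M.P ∅ x y

end SCM

end

section Aux

open Classical

variable {V Val : Type} [Fintype V] [DecidableEq V] [Fintype Val] {G : ADMG V}

lemma mem_parentsF {G : ADMG V} {W : Finset V} {v : V} :
    v ∈ G.parentsF W ↔ v ∉ W ∧ ∃ w ∈ W, G.dir v w := by
  simp [ADMG.parentsF]

lemma wf_dir (G : ADMG V) : WellFounded G.dir := by
  have h1 : IsIrrefl V (Relation.TransGen G.dir) := ⟨G.acyclic⟩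
  have hwf := Finite.wellFounded_of_trans_of_irrefl (Relation.TransGen G.dir)
  exact Subrelation.wf (fun h => Relation.TransGen.single h) hwf

lemma mu_nonneg (M : SCM V Val G) (ω : M.L → M.NVal) : 0 ≤ M.μ ω :=
  Finset.prod_nonneg fun l _ => M.ν_nonneg l (ω l)

lemma Pm_eq (M : SCM V Val G) (I : Finset V) (x y : V → Val) (S : Finset V) :
    M.Pm I x S y = ∑ ω : M.L → M.NVal,
      if ∀ v ∈ S, M.solve I x ω v = y v then M.μ ω else 0 := by
  unfold SCM.Pm SCM.P
  have hpush : ∀ z : V → Val,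
      (if ∀ v ∈ S, z v = y v then ∑ ω : M.L → M.NVal, if M.solve I x ω = z then M.μ ω else 0 else 0)
        = ∑ ω : M.L → M.NVal, if ∀ v ∈ S, z v = y v then (if M.solve I x ω = z then M.μ ω else 0) else 0 := by
    intro z
    by_cases h : ∀ v ∈ S, z v = y v <;> simp [h]
  rw [Finset.sum_congr rfl (fun z _ => hpush z), Finset.sum_comm]
  refine Finset.sum_congr rfl fun ω _ => ?_
  have hz : ∀ z : V → Val,
      (if ∀ v ∈ S, z v = y v then (if M.solve I x ω = z then M.μ ω else 0) else 0)
        = if z = M.solve I x ω then (if ∀ v ∈ S, z v = y v then M.μ ω else 0) else 0 := by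
    intro z
    by_cases h1 : z = M.solve I x ω
    · simp [h1]
    · simp [h1, Ne.symm h1]
  rw [Finset.sum_congr rfl (fun z _ => hz z),
    Finset.sum_ite_eq' Finset.univ (M.solve I x ω)]
  simp

lemma solve_char (M : SCM V Val G) (W : Finset V) (y : V → Val) (ω : M.L → M.NVal) :
    (∀ v ∈ W, M.solve (G.parentsF W) y ω v = y v) ↔ (∀ v ∈ W, M.f v y ω = y v) := by
  have hpa : ∀ p v, v ∈ W → G.dir p v → p ∉ W →
      M.solve (G.parentsF W) y ω p = y p := by
    intro p v hv hdir hp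
    rw [M.solve_spec, if_pos (mem_parentsF.mpr ⟨hp, v, hv, hdir⟩)]
  constructor
  · intro hs v hv
    have hvI : v ∉ G.parentsF W := fun h => (mem_parentsF.mp h).1 hv
    have hspec := M.solve_spec (G.parentsF W) y ω v
    rw [if_neg hvI] at hspec
    have hf := M.f_parents v (M.solve (G.parentsF W) y ω) y ω (fun p hp => by
      by_cases hpW : p ∈ W
      · exact hs p hpW
      · exact hpa p v hv hp hpW)
    rw [← hf, ← hspec]
    exact hs v hv
  · intro hf v hv
    refine (wf_dir G).induction
      (C := fun v => v ∈ W → M.solve (G.parentsF W) y ω v = y v) v ?_ hv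
    intro w IH hw
    have hwI : w ∉ G.parentsF W := fun h => (mem_parentsF.mp h).1 hw
    rw [M.solve_spec, if_neg hwI]
    rw [M.f_parents w (M.solve (G.parentsF W) y ω) y ω (fun p hp => by
      by_cases hpW : p ∈ W
      · exact IH p hp hpW
      · exact hpa p w hw hp hpW)]
    exact hf w hw

lemma Pm_self (M : SCM V Val G) (W : Finset V) (y : V → Val) :
    M.Pm (G.parentsF W) y W y
      = ∑ ω : M.L → M.NVal,
          (if ∀ v ∈ W, M.f v y ω = y v then (1:ℝ) else 0) * M.μ ω := by
  rw [Pm_eq]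
  refine Finset.sum_congr rfl fun ω _ => ?_
  rw [boole_mul]
  exact if_congr (solve_char M W y ω) rfl rfl

lemma factor_pos (M : SCM V Val G) (hpos : M.positive) (y : V → Val) (S : Finset V) :
    0 < ∑ ω : M.L → M.NVal,
        (if ∀ v ∈ S, M.f v y ω = y v then (1:ℝ) else 0) * M.μ ω := by
  have h := hpos y y
  unfold SCM.P at h
  have h0 : ∑ ω : M.L → M.NVal, (0:ℝ)
      < ∑ ω : M.L → M.NVal, if M.solve ∅ y ω = y then M.μ ω else 0 := by simpa using h
  obtain ⟨ω, -, hω⟩ := Finset.exists_lt_of_sum_lt h0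
  by_cases hc : M.solve ∅ y ω = y
  swap
  · rw [if_neg hc] at hω; exact absurd hω (lt_irrefl 0)
  rw [if_pos hc] at hω
  have hfy : ∀ v, M.f v y ω = y v := by
    intro v
    have hspec := M.solve_spec ∅ y ω v
    rw [if_neg (Finset.notMem_empty v)] at hspec
    have hfp : M.f v (M.solve ∅ y ω) ω = M.f v y ω :=
      M.f_parents v _ y ω (fun p _ => congrFun hc p)
    rw [hfp] at hspec
    rw [← hspec]
    exact congrFun hc v
  apply Finset.sum_pos'
  · intro i _
    by_cases hi : ∀ v ∈ S, M.f v y i = y v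
    · simp only [if_pos hi, one_mul]; exact mu_nonneg M i
    · simp [hi]
  · exact ⟨ω, Finset.mem_univ ω, by rw [if_pos (fun v _ => hfy v), one_mul]; exact hω⟩

end Aux

section Indep

open Classical

lemma sum_pi_prod_eq_one {ι N : Type} [Fintype ι] [DecidableEq ι] [Fintype N]
    (w : ι → N → ℝ) (hw : ∀ i, ∑ x, w i x = 1) :
    ∑ b : ι → N, ∏ i, w i (b i) = 1 := by
  classical
  calc ∑ b : ι → N, ∏ i, w i (b i)
      = ∑ b ∈ Fintype.piFinset (fun _ : ι => (Finset.univ : Finset N)), ∏ i, w i (b i) := by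
        rw [Fintype.piFinset_univ]
    _ = ∏ i : ι, ∑ x, w i x := (Finset.prod_univ_sum _ _).symm
    _ = 1 := by simp [hw]

lemma indep2 {L N : Type} [Fintype L] [DecidableEq L] [Fintype N]
    (ν : L → N → ℝ) (hν1 : ∀ l, ∑ x, ν l x = 1)
    (S : Set L) (g h : (L → N) → ℝ)
    (hg : ∀ ω ω' : L → N, (∀ l ∈ S, ω l = ω' l) → g ω = g ω')
    (hh : ∀ ω ω' : L → N, (∀ l, l ∉ S → ω l = ω' l) → h ω = h ω') :
    ∑ ω : L → N, g ω * h ω * ∏ l, ν l (ω l) =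
      (∑ ω : L → N, g ω * ∏ l, ν l (ω l)) * (∑ ω : L → N, h ω * ∏ l, ν l (ω l)) := by
  classical
  have hNE : L → Nonempty N := by
    intro l
    by_contra hN
    have hE : IsEmpty N := not_nonempty_iff.mp hN
    have := hν1 l
    simp [Finset.univ_eq_empty] at this
  set e := Equiv.piEquivPiSubtypeProd (fun l : L => l ∈ S) (fun _ => N) with he
  let b₀ : {l : L // l ∉ S} → N := fun l => (hNE l.1).some
  let a₀ : {l : L // l ∈ S} → N := fun l => (hNE l.1).some
  let Gf : ({l : L // l ∈ S} → N) → ℝ := fun a => g (e.symm (a, b₀))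
  let Hf : ({l : L // l ∉ S} → N) → ℝ := fun b => h (e.symm (a₀, b))
  let μ1 : ({l : L // l ∈ S} → N) → ℝ := fun a => ∏ l : {l : L // l ∈ S}, ν l.1 (a l)
  let μ2 : ({l : L // l ∉ S} → N) → ℝ := fun b => ∏ l : {l : L // l ∉ S}, ν l.1 (b l)
  have hg' : ∀ a b, g (e.symm (a, b)) = Gf a := by
    intro a b
    refine hg _ _ (fun l hl => ?_)
    simp [he, Equiv.piEquivPiSubtypeProd_symm_apply, dif_pos hl]
  have hh' : ∀ a b, h (e.symm (a, b)) = Hf b := by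
    intro a b
    refine hh _ _ (fun l hl => ?_)
    simp [he, Equiv.piEquivPiSubtypeProd_symm_apply, dif_neg hl]
  have hμ : ∀ a b, (∏ l, ν l (e.symm (a, b) l)) = μ1 a * μ2 b := by
    intro a b
    rw [← Fintype.prod_subtype_mul_prod_subtype (fun l : L => l ∈ S)
      (fun l => ν l (e.symm (a, b) l))]
    congr 1
    · refine Finset.prod_congr rfl (fun l _ => ?_)
      simp [he, Equiv.piEquivPiSubtypeProd_symm_apply, dif_pos l.2]
    · refine Finset.prod_congr rfl (fun l _ => ?_)
      simp [he, Equiv.piEquivPiSubtypeProd_symm_apply, dif_neg l.2]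
  have hsum1 : ∑ a, μ1 a = 1 := sum_pi_prod_eq_one _ (fun l => hν1 l.1)
  have hsum2 : ∑ b, μ2 b = 1 := sum_pi_prod_eq_one _ (fun l => hν1 l.1)
  have hLHS : ∑ ω : L → N, g ω * h ω * ∏ l, ν l (ω l)
      = (∑ a, Gf a * μ1 a) * (∑ b, Hf b * μ2 b) := by
    calc ∑ ω : L → N, g ω * h ω * ∏ l, ν l (ω l)
        = ∑ p : ({l : L // l ∈ S} → N) × ({l : L // l ∉ S} → N),
            g (e.symm p) * h (e.symm p) * ∏ l, ν l (e.symm p l) :=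
          (Equiv.sum_comp e.symm _).symm
      _ = ∑ a, ∑ b, (Gf a * μ1 a) * (Hf b * μ2 b) := by
          rw [Fintype.sum_prod_type]
          refine Finset.sum_congr rfl (fun a _ => Finset.sum_congr rfl (fun b _ => ?_))
          rw [hg', hh', hμ]; ring
      _ = (∑ a, Gf a * μ1 a) * (∑ b, Hf b * μ2 b) := (Finset.sum_mul_sum _ _ _ _).symm
  have hG : ∑ ω : L → N, g ω * ∏ l, ν l (ω l) = ∑ a, Gf a * μ1 a := by
    calc ∑ ω : L → N, g ω * ∏ l, ν l (ω l)
        = ∑ p : ({l : L // l ∈ S} → N) × ({l : L // l ∉ S} → N),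
            g (e.symm p) * ∏ l, ν l (e.symm p l) := (Equiv.sum_comp e.symm _).symm
      _ = ∑ a, ∑ b, (Gf a * μ1 a) * μ2 b := by
          rw [Fintype.sum_prod_type]
          refine Finset.sum_congr rfl (fun a _ => Finset.sum_congr rfl (fun b _ => ?_))
          rw [hg', hμ]; ring
      _ = (∑ a, Gf a * μ1 a) * (∑ b, μ2 b) := (Finset.sum_mul_sum _ _ _ _).symm
      _ = ∑ a, Gf a * μ1 a := by rw [hsum2, mul_one]
  have hHs : ∑ ω : L → N, h ω * ∏ l, ν l (ω l) = ∑ b, Hf b * μ2 b := by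
    calc ∑ ω : L → N, h ω * ∏ l, ν l (ω l)
        = ∑ p : ({l : L // l ∈ S} → N) × ({l : L // l ∉ S} → N),
            h (e.symm p) * ∏ l, ν l (e.symm p l) := (Equiv.sum_comp e.symm _).symm
      _ = ∑ a, ∑ b, μ1 a * (Hf b * μ2 b) := by
          rw [Fintype.sum_prod_type]
          refine Finset.sum_congr rfl (fun a _ => Finset.sum_congr rfl (fun b _ => ?_))
          rw [hh', hμ]; ring
      _ = (∑ a, μ1 a) * (∑ b, Hf b * μ2 b) := (Finset.sum_mul_sum _ _ _ _).symm
      _ = ∑ b, Hf b * μ2 b := by rw [hsum1, one_mul]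
  rw [hLHS, hG, hHs]

lemma indep_prod {L N ι : Type} [Fintype L] [DecidableEq L] [Fintype N]
    (ν : L → N → ℝ) (hν1 : ∀ l, ∑ x, ν l x = 1)
    (g0 : (L → N) → ℝ) (S0 : Set L)
    (hg0 : ∀ ω ω' : L → N, (∀ l ∈ S0, ω l = ω' l) → g0 ω = g0 ω')
    (T : Finset ι) (g : ι → (L → N) → ℝ) (S : ι → Set L)
    (hg : ∀ i ∈ T, ∀ ω ω' : L → N, (∀ l ∈ S i, ω l = ω' l) → g i ω = g i ω')
    (hd0 : ∀ i ∈ T, ∀ l ∈ S0, l ∉ S i)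
    (hd : ∀ i ∈ T, ∀ j ∈ T, i ≠ j → ∀ l ∈ S i, l ∉ S j) :
    ∑ ω : L → N, g0 ω * (∏ i ∈ T, g i ω) * ∏ l, ν l (ω l)
      = (∑ ω : L → N, g0 ω * ∏ l, ν l (ω l)) *
          ∏ i ∈ T, ∑ ω : L → N, g i ω * ∏ l, ν l (ω l) := by
  classical
  revert hg hd0 hd
  induction T using Finset.induction_on with
  | empty => intro _ _ _; simp
  | @insert j T hjT ih =>
    intro hg hd0 hd
    have hmem : ∀ i ∈ T, i ∈ insert j T := fun i hi => Finset.mem_insert_of_mem hi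
    have hj : j ∈ insert j T := Finset.mem_insert_self j T
    have hh : ∀ ω ω' : L → N, (∀ l, l ∉ S j → ω l = ω' l) →
        (g0 ω * ∏ i ∈ T, g i ω) = (g0 ω' * ∏ i ∈ T, g i ω') := by
      intro ω ω' hagree
      have h0 : g0 ω = g0 ω' := hg0 ω ω' (fun l hl => hagree l (hd0 j hj l hl))
      have hT : ∀ i ∈ T, g i ω = g i ω' := fun i hi =>
        hg i (hmem i hi) ω ω'
          (fun l hl => hagree l (hd i (hmem i hi) j hj (fun h => hjT (h ▸ hi)) l hl))
      rw [h0, Finset.prod_congr rfl hT]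
    calc ∑ ω : L → N, g0 ω * (∏ i ∈ insert j T, g i ω) * ∏ l, ν l (ω l)
        = ∑ ω : L → N, g j ω * (g0 ω * ∏ i ∈ T, g i ω) * ∏ l, ν l (ω l) := by
          refine Finset.sum_congr rfl (fun ω _ => ?_)
          rw [Finset.prod_insert hjT]; ring
      _ = (∑ ω : L → N, g j ω * ∏ l, ν l (ω l)) *
            (∑ ω : L → N, (g0 ω * ∏ i ∈ T, g i ω) * ∏ l, ν l (ω l)) := by
          exact indep2 ν hν1 (S j) (g j) (fun ω => g0 ω * ∏ i ∈ T, g i ω) (hg j hj) hh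
      _ = (∑ ω : L → N, g j ω * ∏ l, ν l (ω l)) *
            ((∑ ω : L → N, g0 ω * ∏ l, ν l (ω l)) *
              ∏ i ∈ T, ∑ ω : L → N, g i ω * ∏ l, ν l (ω l)) := by
          rw [ih (fun i hi => hg i (hmem i hi)) (fun i hi => hd0 i (hmem i hi))
            (fun i hi j' hj' hij => hd i (hmem i hi) j' (hmem j' hj') hij)]
      _ = (∑ ω : L → N, g0 ω * ∏ l, ν l (ω l)) *
            ∏ i ∈ insert j T, ∑ ω : L → N, g i ω * ∏ l, ν l (ω l) := by
          rw [Finset.prod_insert hjT]; ring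

end Indep
/-- under the modularity condition,
`P(H ∪ 𝒜 | do(Pa(H ∪ 𝒜))) = P_{Pa(H)}(H) · ∏_j P_{Pa(C_j^+)}(C_j^+)` where
`C_j^+ = C_j ∩ 𝒜` ranges over the nonempty intersections of the c-components
with `𝒜`; consequently the c-factor of `H` is identified as the conditional
divided by that product. -/
theorem hnode_c_factor_identified_via_modularity
    {V Val : Type} [Fintype V] [DecidableEq V] [Fintype Val]
    (G : ADMG V) {n : ℕ} (C : Fin n → Finset V)
    (hcc : ∀ i, G.isCComponent ↑(C i))
    (hdisj : ∀ i j, i ≠ j → Disjoint (C i) (C j))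
    (hcover : ∀ v : V, ∃ i, v ∈ C i)
    (H A : Finset V)
    (hH : ∀ i, (C i ∩ H).Nonempty → C i ⊆ H)
    (hA : ↑A ⊆ G.ancestors ↑H \ ↑H)
    (M : SCM V Val G) (hpos : M.positive)
    (hmod : ∀ y : V → Val,
      M.Pm (G.parentsF (H ∪ A)) y (H ∪ A) y =
        M.cond ∅ y (H ∪ A) (G.parentsF (H ∪ A)) y)
    (y : V → Val) :
    (M.Pm (G.parentsF (H ∪ A)) y (H ∪ A) y =
      M.Pm (G.parentsF H) y H y *
        ∏ i ∈ Finset.univ.filter fun i => (C i ∩ A).Nonempty,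
          M.Pm (G.parentsF (C i ∩ A)) y (C i ∩ A) y) ∧
    (M.Pm (G.parentsF H) y H y =
      M.cond ∅ y (H ∪ A) (G.parentsF (H ∪ A)) y /
        ∏ i ∈ Finset.univ.filter fun i => (C i ∩ A).Nonempty,
          M.Pm (G.parentsF (C i ∩ A)) y (C i ∩ A) y) := by
  classical
  set filt : Finset (Fin n) := Finset.univ.filter (fun i => (C i ∩ A).Nonempty) with hfilt
  have hAH : ∀ a ∈ A, a ∉ H := by
    intro a ha haH
    exact (hA (Finset.mem_coe.mpr ha)).2 (Finset.mem_coe.mpr haH)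
  have hcomp : ∀ (i : Fin n) (v w : V), w ∈ C i → G.bidir v w → v ∈ C i := by
    intro i v w hw hb
    exact Finset.mem_coe.mp ((hcc i).2.2 w (Finset.mem_coe.mpr hw) v
      (Relation.ReflTransGen.single (G.bidir_symm v w hb)))
  set S0 : Set M.L := {l | ∃ v ∈ H, M.reads v l} with hS0
  set SS : Fin n → Set M.L := fun i => {l | ∃ v ∈ C i ∩ A, M.reads v l} with hSS
  have hdis0 : ∀ i ∈ filt, ∀ l ∈ S0, l ∉ SS i := by
    intro i _ l hl0 hli
    obtain ⟨v, hvH, hrv⟩ := hl0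
    obtain ⟨w, hwCA, hrw⟩ := hli
    have hwA : w ∈ A := (Finset.mem_inter.mp hwCA).2
    have hwC : w ∈ C i := (Finset.mem_inter.mp hwCA).1
    have hvw : v ≠ w := fun h => hAH w hwA (h ▸ hvH)
    have hb := M.semiMarkov v w l hvw hrv hrw
    have hvC : v ∈ C i := hcomp i v w hwC hb
    exact hAH w hwA (hH i ⟨v, Finset.mem_inter.mpr ⟨hvC, hvH⟩⟩ hwC)
  have hdisij : ∀ i ∈ filt, ∀ j ∈ filt, i ≠ j → ∀ l ∈ SS i, l ∉ SS j := by
    intro i _ j _ hij l hli hlj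
    obtain ⟨v, hvCA, hrv⟩ := hli
    obtain ⟨w, hwCA, hrw⟩ := hlj
    have hvC : v ∈ C i := (Finset.mem_inter.mp hvCA).1
    have hwC : w ∈ C j := (Finset.mem_inter.mp hwCA).1
    by_cases hvw : v = w
    · exact Finset.disjoint_left.mp (hdisj i j hij) hvC (hvw ▸ hwC)
    · have hb := M.semiMarkov v w l hvw hrv hrw
      have hvCj : v ∈ C j := hcomp j v w hwC hb
      exact Finset.disjoint_left.mp (hdisj i j hij) hvC hvCj
  have hdep : ∀ (W : Finset V) (SW : Set M.L), (∀ v ∈ W, ∀ l, M.reads v l → l ∈ SW) →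
      ∀ ω ω' : M.L → M.NVal, (∀ l ∈ SW, ω l = ω' l) →
      (if ∀ v ∈ W, M.f v y ω = y v then (1:ℝ) else 0)
        = (if ∀ v ∈ W, M.f v y ω' = y v then (1:ℝ) else 0) := by
    intro W SW hWS ω ω' hagree
    have hf : ∀ v ∈ W, M.f v y ω = M.f v y ω' := fun v hv =>
      M.f_latents v y ω ω' (fun l hl => hagree l (hWS v hv l hl))
    refine if_congr ⟨fun h v hv => ?_, fun h v hv => ?_⟩ rfl rfl
    · rw [← hf v hv]; exact h v hv
    · rw [hf v hv]; exact h v hv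
  have hsplit : ∀ ω : M.L → M.NVal,
      (if ∀ v ∈ H ∪ A, M.f v y ω = y v then (1:ℝ) else 0)
        = (if ∀ v ∈ H, M.f v y ω = y v then (1:ℝ) else 0)
          * ∏ i ∈ filt, (if ∀ v ∈ C i ∩ A, M.f v y ω = y v then (1:ℝ) else 0) := by
    intro ω
    rw [Finset.prod_boole]
    by_cases h1 : ∀ v ∈ H ∪ A, M.f v y ω = y v
    · rw [if_pos h1, if_pos (fun v hv => h1 v (Finset.mem_union_left A hv)),
        if_pos (fun i _ v hv => h1 v (Finset.mem_union_right H (Finset.mem_inter.mp hv).2)),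
        one_mul]
    · rw [if_neg h1]
      by_cases h2 : ∀ v ∈ H, M.f v y ω = y v
      · have h3 : ¬ ∀ i ∈ filt, ∀ v ∈ C i ∩ A, M.f v y ω = y v := by
          intro h3
          apply h1
          intro v hv
          rcases Finset.mem_union.mp hv with hvH | hvA
          · exact h2 v hvH
          · obtain ⟨i, hvC⟩ := hcover v
            have hi : i ∈ filt := Finset.mem_filter.mpr
              ⟨Finset.mem_univ i, ⟨v, Finset.mem_inter.mpr ⟨hvC, hvA⟩⟩⟩
            exact h3 i hi v (Finset.mem_inter.mpr ⟨hvC, hvA⟩)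
        rw [if_pos h2, if_neg h3, mul_zero]
      · rw [if_neg h2, zero_mul]
  have key1 : M.Pm (G.parentsF (H ∪ A)) y (H ∪ A) y
      = M.Pm (G.parentsF H) y H y *
          ∏ i ∈ filt, M.Pm (G.parentsF (C i ∩ A)) y (C i ∩ A) y := by
    rw [Pm_self M (H ∪ A) y, Pm_self M H y,
      Finset.prod_congr rfl (fun i (_ : i ∈ filt) => Pm_self M (C i ∩ A) y),
      Finset.sum_congr rfl (fun ω _ => congrArg (· * M.μ ω) (hsplit ω))]
    exact indep_prod M.ν M.ν_sum
      (fun ω => if ∀ v ∈ H, M.f v y ω = y v then (1:ℝ) else 0) S0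
      (hdep H S0 (fun v hv l hl => ⟨v, hv, hl⟩)) filt
      (fun i ω => if ∀ v ∈ C i ∩ A, M.f v y ω = y v then (1:ℝ) else 0) SS
      (fun i _ => hdep (C i ∩ A) (SS i) (fun v hv l hl => ⟨v, hv, hl⟩))
      hdis0 hdisij
  have hprodpos : 0 < ∏ i ∈ filt, M.Pm (G.parentsF (C i ∩ A)) y (C i ∩ A) y := by
    refine Finset.prod_pos (fun i _ => ?_)
    rw [Pm_self]
    exact factor_pos M hpos y (C i ∩ A)
  refine ⟨key1, ?_⟩
  rw [← hmod y, key1]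
  exact (mul_div_cancel_right₀ _ (ne_of_gt hprodpos)).symm
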